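/- Let M^n be a submanifold embedded in M̃^{n+1}, N a choice of unit normal, v a vector field on M̃ tangent to M, and T = 2 Def(v) − p I the stress tensor. Then the tangential part of T N equals the tangential part of the Lie bracket [N, v]: (TN)_tan = (L_N v)_tan = [N,v]_tan. -/
import Mathlib


open scoped RealInnerProductSpace

noncomputable section

/-- Let `M ⊂ ℝ^{n+1}` be an embedded hypersurface with local unit normal `N`, `v` a vector field
tangent to `M`, and `T = 2 Def(v) − pr·I` the stress tensor; in Euclidean coordinates
`2 Def(v) N = ∇̃v(N) + (∇̃v)ᵀ(N)`.  Then at `p ∈ M` the tangential part of `T N` equals the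
tangential part of the Lie bracket `[N,v] = L_N v`:  `(TN)_tan = (L_N v)_tan = [N,v]_tan`. -/
theorem navier_traction_eq_lie_bracket (n : ℕ)
    (M : Set (EuclideanSpace ℝ (Fin (n + 1))))
    (v N : EuclideanSpace ℝ (Fin (n + 1)) → EuclideanSpace ℝ (Fin (n + 1)))
    (p : EuclideanSpace ℝ (Fin (n + 1))) (hp : p ∈ M) (pr : ℝ)
    (hv : DifferentiableAt ℝ v p) (hN : DifferentiableAt ℝ N p)
    (hunit : ∀ᶠ x in nhds p, ‖N x‖ = 1)
    (htan : ∀ x ∈ M, ⟪v x, N x⟫ = 0)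
    -- the shape operator of the embedded hypersurface is self-adjoint on tangent vectors
    (hsym : ∀ u w : EuclideanSpace ℝ (Fin (n + 1)), ⟪u, N p⟫ = 0 → ⟪w, N p⟫ = 0 →
      ⟪fderiv ℝ N p u, w⟫ = ⟪fderiv ℝ N p w, u⟫)
    -- every tangent direction at `p` is the velocity of a curve inside `M`
    (hcurve : ∀ u : EuclideanSpace ℝ (Fin (n + 1)), ⟪u, N p⟫ = 0 →
      ∃ γ : ℝ → EuclideanSpace ℝ (Fin (n + 1)),
        γ 0 = p ∧ (∀ t, γ t ∈ M) ∧ HasDerivAt γ u 0) :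
    let TN : EuclideanSpace ℝ (Fin (n + 1)) :=
      fderiv ℝ v p (N p) + ContinuousLinearMap.adjoint (fderiv ℝ v p) (N p) - pr • N p
    let br : EuclideanSpace ℝ (Fin (n + 1)) := fderiv ℝ v p (N p) - fderiv ℝ N p (v p)
    TN - ⟪TN, N p⟫ • N p = br - ⟪br, N p⟫ • N p := by
  intro TN br
  have hNp : ⟪N p, N p⟫ = (1 : ℝ) := by
    have h1 : ‖N p‖ = 1 := hunit.self_of_nhds
    rw [real_inner_self_eq_norm_sq, h1]; norm_num
  have hvp : ⟪v p, N p⟫ = 0 := htan p hp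
  -- key identity: for tangent w, ⟪∇v(w), N p⟫ + ⟪v p, ∇N(w)⟫ = 0
  have key : ∀ w : EuclideanSpace ℝ (Fin (n + 1)), ⟪w, N p⟫ = 0 →
      ⟪fderiv ℝ v p w, N p⟫ + ⟪v p, fderiv ℝ N p w⟫ = 0 := by
    intro w hw
    obtain ⟨γ, hγ0, hγM, hγ'⟩ := hcurve w hw
    have hv' : HasFDerivAt v (fderiv ℝ v p) (γ 0) := hγ0.symm ▸ hv.hasFDerivAt
    have hN' : HasFDerivAt N (fderiv ℝ N p) (γ 0) := hγ0.symm ▸ hN.hasFDerivAt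
    have hvγ : HasDerivAt (fun t => v (γ t)) (fderiv ℝ v p w) 0 :=
      hv'.comp_hasDerivAt 0 hγ'
    have hNγ : HasDerivAt (fun t => N (γ t)) (fderiv ℝ N p w) 0 :=
      hN'.comp_hasDerivAt 0 hγ'
    have hf : HasDerivAt (fun t => ⟪v (γ t), N (γ t)⟫)
        (⟪v (γ 0), fderiv ℝ N p w⟫ + ⟪fderiv ℝ v p w, N (γ 0)⟫) 0 :=
      hvγ.inner ℝ hNγ
    have hconst : (fun t => ⟪v (γ t), N (γ t)⟫) = fun _ => (0 : ℝ) := by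
      funext t; exact htan (γ t) (hγM t)
    have h0 : HasDerivAt (fun _ : ℝ => (0 : ℝ)) 0 0 := hasDerivAt_const _ _
    have := hf.unique (hconst ▸ h0)
    rw [hγ0] at this
    linarith [this]
  -- difference of the two sides
  set D : EuclideanSpace ℝ (Fin (n + 1)) :=
    (TN - ⟪TN, N p⟫ • N p) - (br - ⟪br, N p⟫ • N p) with hD
  have hDtan : ⟪D, N p⟫ = 0 := by
    simp only [hD, inner_sub_left, inner_smul_left, hNp, conj_trivial]
    ring
  -- ⟪TN - br, w⟫ = 0 for tangent w
  have horth : ∀ w : EuclideanSpace ℝ (Fin (n + 1)), ⟪w, N p⟫ = 0 → ⟪TN - br, w⟫ = 0 := by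
    intro w hw
    have hadj : ⟪(ContinuousLinearMap.adjoint (fderiv ℝ v p)) (N p), w⟫
        = ⟪N p, fderiv ℝ v p w⟫ := ContinuousLinearMap.adjoint_inner_left _ _ _
    have hs : ⟪fderiv ℝ N p (v p), w⟫ = ⟪fderiv ℝ N p w, v p⟫ := hsym (v p) w hvp hw
    have hk := key w hw
    have hNw : ⟪N p, w⟫ = 0 := by rw [real_inner_comm]; exact hw
    simp only [TN, br, inner_sub_left, inner_add_left, inner_smul_left, hadj, hs, hNw,
      conj_trivial, mul_zero]
    linarith [hk, real_inner_comm (N p) (fderiv ℝ v p w),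
      real_inner_comm (fderiv ℝ N p w) (v p)]
  have hDD : ⟪D, D⟫ = 0 := by
    have h1 : ⟪TN - br, D⟫ = 0 := horth D hDtan
    have h2 : ⟪D, D⟫ = ⟪TN - br, D⟫ - (⟪TN, N p⟫ - ⟪br, N p⟫) * ⟪N p, D⟫ := by
      simp only [hD, inner_sub_left, inner_smul_left, conj_trivial]; ring
    have h3 : ⟪N p, D⟫ = 0 := by rw [real_inner_comm]; exact hDtan
    rw [h2, h1, h3]; ring
  have : D = 0 := by
    rwa [inner_self_eq_zero] at hDD
  have := sub_eq_zero.mp (hD ▸ this)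
  exact this
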